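/- If A ⊆ ℤ has positive upper density, i.e. limsup_{N→∞} |A ∩ [-N,N]| / (2N+1) > 0, then A contains infinitely many parallelograms: there are infinitely many triples (x, a, b) ∈ ℤ³ with a ≠ 0 and b ≠ 0 such that x, x+a, x+b, and x+a+b all belong to A. -/

import Mathlib

open Filter

lemma parallelogram_far (A : Set ℤ) (δ : ℝ) (hδ : 0 < δ)
    (hfreq : ∃ᶠ N : ℕ in atTop,
      δ < ((A ∩ Set.Icc (-(N : ℤ)) N).ncard : ℝ) / (2 * N + 1)) (M : ℕ) :
    ∃ x a b : ℤ, a ≠ 0 ∧ b ≠ 0 ∧ x ∉ Set.Icc (-(M : ℤ)) (M : ℤ) ∧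
      x ∈ A ∧ x + a ∈ A ∧ x + b ∈ A ∧ x + a + b ∈ A := by
  -- choose a large N with big density
  obtain ⟨N₀, hN₀⟩ := exists_nat_ge ((2 * M + 1) / δ + 7 / δ ^ 2 + 1)
  obtain ⟨N, hNN₀, hN⟩ := (frequently_atTop.mp hfreq) N₀
  have hNR : ((2 * M + 1) / δ + 7 / δ ^ 2 + 1 : ℝ) ≤ N := hN₀.trans (by exact_mod_cast hNN₀)
  have h1 : ((2 * M + 1) / δ : ℝ) ≤ N := by
    have : (0:ℝ) ≤ 7 / δ ^ 2 + 1 := by positivity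
    linarith
  have h2 : (7 / δ ^ 2 : ℝ) ≤ N := by
    have : (0:ℝ) ≤ (2 * M + 1) / δ + 1 := by positivity
    linarith
  have hN1 : (1:ℝ) ≤ N := by
    have : (0:ℝ) ≤ (2 * M + 1) / δ + 7 / δ ^ 2 := by positivity
    linarith
  -- the big finite set
  have hAfin : (A ∩ Set.Icc (-(N : ℤ)) N).Finite :=
    Set.Finite.inter_of_right (Set.finite_Icc _ _) _
  set S : Set ℤ := (A ∩ Set.Icc (-(N : ℤ)) N) \ Set.Icc (-(M : ℤ)) M with hSdef
  have hSfin : S.Finite := hAfin.diff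
  set T : Finset ℤ := hSfin.toFinset with hTdef
  have hTmem : ∀ z, z ∈ T ↔ z ∈ S := fun z => hSfin.mem_toFinset
  -- density lower bound on ncard
  have hpos : (0:ℝ) < 2 * N + 1 := by positivity
  have hm : δ * (2 * N + 1) < ((A ∩ Set.Icc (-(N : ℤ)) N).ncard : ℝ) := by
    rw [lt_div_iff₀ hpos] at hN
    linarith [hN]
  -- card of T
  have hcard_sub : (A ∩ Set.Icc (-(N : ℤ)) N).ncard ≤ T.card + (2 * M + 1) := by
    have hsub : A ∩ Set.Icc (-(N : ℤ)) N ⊆ S ∪ Set.Icc (-(M : ℤ)) M := by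
      intro z hz
      by_cases h : z ∈ Set.Icc (-(M : ℤ)) M
      · exact Or.inr h
      · exact Or.inl ⟨hz, h⟩
    have hIcc : (Set.Icc (-(M : ℤ)) M).ncard = 2 * M + 1 := by
      rw [← Finset.coe_Icc, Set.ncard_coe_finset, Int.card_Icc]
      omega
    calc (A ∩ Set.Icc (-(N : ℤ)) N).ncard
        ≤ (S ∪ Set.Icc (-(M : ℤ)) M).ncard :=
          Set.ncard_le_ncard hsub (hSfin.union (Set.finite_Icc _ _))
      _ ≤ S.ncard + (Set.Icc (-(M : ℤ)) M).ncard := Set.ncard_union_le _ _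
      _ = T.card + (2 * M + 1) := by
          rw [hIcc, Set.ncard_eq_toFinset_card _ hSfin]
  set k : ℕ := T.card with hkdef
  have hkR : δ * (N : ℝ) < (k : ℝ) := by
    have hmk : ((A ∩ Set.Icc (-(N : ℤ)) N).ncard : ℝ) ≤ (k : ℝ) + (2 * M + 1) := by
      exact_mod_cast hcard_sub
    have hδN : δ * ((N:ℝ) + 1) ≥ 2 * M + 1 := by
      rw [div_le_iff₀ hδ] at h1
      linarith
    nlinarith
  have hkN : (k : ℝ) ≤ 2 * N + 1 := by
    have hsub2 : S ⊆ Set.Icc (-(N : ℤ)) N := fun z hz => hz.1.2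
    have : S.ncard ≤ (Set.Icc (-(N : ℤ)) N).ncard :=
      Set.ncard_le_ncard hsub2 (Set.finite_Icc _ _)
    have hIccN : (Set.Icc (-(N : ℤ)) N).ncard = 2 * N + 1 := by
      rw [← Finset.coe_Icc, Set.ncard_coe_finset, Int.card_Icc]
      omega
    rw [Set.ncard_eq_toFinset_card _ hSfin] at this
    rw [hIccN] at this
    exact_mod_cast this
  -- the key counting inequality: k * k > 4N + k
  have hkk : 4 * N + k < k * k := by
    have hδNpos : (0:ℝ) ≤ δ * N := by positivity
    have hsq : δ ^ 2 * (N:ℝ) ^ 2 ≤ (k:ℝ) * k := by nlinarith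
    have h7 : (7:ℝ) * N ≤ δ ^ 2 * (N:ℝ) ^ 2 := by
      rw [div_le_iff₀ (by positivity : (0:ℝ) < δ ^ 2)] at h2
      nlinarith
    have : (4 * N + k : ℝ) < (k:ℝ) * k := by nlinarith
    exact_mod_cast this
  -- pigeonhole on differences
  set t : Finset ℤ := (Finset.Icc (-(2 * N : ℤ)) (2 * N)).erase 0 with htdef
  have htcard : t.card = 4 * N := by
    rw [htdef, Finset.card_erase_of_mem (by rw [Finset.mem_Icc]; omega), Int.card_Icc]
    omega
  have hmaps : ∀ p ∈ T.offDiag, (p.2 - p.1) ∈ t := by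
    rintro ⟨u, v⟩ hp
    rw [Finset.mem_offDiag] at hp
    obtain ⟨hu, hv, huv⟩ := hp
    have hu' := ((hTmem u).mp hu).1.2
    have hv' := ((hTmem v).mp hv).1.2
    simp only [Set.mem_Icc] at hu' hv'
    simp only [htdef, Finset.mem_erase, Finset.mem_Icc]
    constructor
    · omega
    · omega
  have hlt : t.card < T.offDiag.card := by
    rw [htcard, Finset.offDiag_card, ← hkdef]
    omega
  obtain ⟨p, hp, q, hq, hpq, heq⟩ :=
    Finset.exists_ne_map_eq_of_card_lt_of_maps_to hlt hmaps
  rw [Finset.mem_offDiag] at hp hq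
  obtain ⟨hp1, hp2, hp12⟩ := hp
  obtain ⟨hq1, hq2, hq12⟩ := hq
  -- build the parallelogram
  refine ⟨p.1, p.2 - p.1, q.1 - p.1, sub_ne_zero.mpr (Ne.symm hp12), ?_, ?_, ?_, ?_, ?_, ?_⟩
  · intro h
    apply hpq
    have h1' : p.1 = q.1 := by omega
    have h2' : p.2 = q.2 := by omega
    exact Prod.ext h1' h2'
  · exact ((hTmem p.1).mp hp1).2
  · exact ((hTmem p.1).mp hp1).1.1
  · have : p.1 + (p.2 - p.1) = p.2 := by ring
    rw [this]
    exact ((hTmem p.2).mp hp2).1.1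
  · have : p.1 + (q.1 - p.1) = q.1 := by ring
    rw [this]
    exact ((hTmem q.1).mp hq1).1.1
  · have : p.1 + (p.2 - p.1) + (q.1 - p.1) = q.2 := by omega
    rw [this]
    exact ((hTmem q.2).mp hq2).1.1

/-- A set of integers of positive upper density contains infinitely many
parallelograms `{x, x+a, x+b, x+a+b}` with `a, b ≠ 0`. -/
theorem parallelograms_of_pos_upper_density (A : Set ℤ)
    (hA : 0 < limsup (fun N : ℕ =>
      ((A ∩ Set.Icc (-(N : ℤ)) N).ncard : ℝ) / (2 * N + 1)) atTop) :
    {p : ℤ × ℤ × ℤ | p.2.1 ≠ 0 ∧ p.2.2 ≠ 0 ∧ p.1 ∈ A ∧ p.1 + p.2.1 ∈ A ∧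
      p.1 + p.2.2 ∈ A ∧ p.1 + p.2.1 + p.2.2 ∈ A}.Infinite := by
  set f : ℕ → ℝ := fun N =>
    ((A ∩ Set.Icc (-(N : ℤ)) N).ncard : ℝ) / (2 * N + 1) with hfdef
  have hbdd : IsBoundedUnder (· ≥ ·) atTop f :=
    isBoundedUnder_of ⟨0, fun N => div_nonneg (Nat.cast_nonneg _) (by positivity)⟩
  have hfreq : ∃ᶠ N : ℕ in atTop, 0 < f N :=
    frequently_lt_of_lt_limsup hbdd.isCoboundedUnder_le hA
  -- get δ : use half the limsup? simpler: use δ from a single frequent value? No: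
  -- we use δ = limsup / 2
  by_contra hfin
  rw [Set.not_infinite] at hfin
  set P := {p : ℤ × ℤ × ℤ | p.2.1 ≠ 0 ∧ p.2.2 ≠ 0 ∧ p.1 ∈ A ∧ p.1 + p.2.1 ∈ A ∧
      p.1 + p.2.2 ∈ A ∧ p.1 + p.2.1 + p.2.2 ∈ A} with hPdef
  set M : ℕ := hfin.toFinset.sup (fun p => p.1.natAbs) with hMdef
  have hL : (0:ℝ) < limsup f atTop := hA
  have hfreq2 : ∃ᶠ N : ℕ in atTop, limsup f atTop / 2 < f N :=
    frequently_lt_of_lt_limsup hbdd.isCoboundedUnder_le (by linarith)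
  obtain ⟨x, a, b, ha, hb, hxM, hx1, hx2, hx3, hx4⟩ :=
    parallelogram_far A (limsup f atTop / 2) (by linarith) hfreq2 M
  have hmem : (x, a, b) ∈ P := ⟨ha, hb, hx1, hx2, hx3, hx4⟩
  have : x.natAbs ≤ M :=
    Finset.le_sup (f := fun p : ℤ × ℤ × ℤ => p.1.natAbs) (hfin.mem_toFinset.mpr hmem)
  simp only [Set.mem_Icc] at hxM
  omega
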